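/- (Pointwise cleaning criterion) Let Λ ⊆ X and (hₙ)_{n≥1} functions with 0 ≤ hₙ ≤ χ_Λ, and let μₙ := β_{h₁} * ⋯ * β_{hₙ} (cloud convolution). Then μₙ converges pointwise (markerwise) to π_Λ if and only if Σ_{n=1}^∞ hₙ(x) = ∞ for every x ∈ Λ, where π_Λ is the indicator cloud of ∂Λ, the set of markers (x₀,…,x_k) with x₀,…,x_{k-1} ∈ Λ and x_k ∉ Λ. -/

import Mathlib

open scoped ENNReal

/-- Convolution of clouds (real functions on markers, i.e. nonempty lists). -/
def cloudConv {X : Type*} (μ ν : List X → ℝ) : List X → ℝ :=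
  fun η => ∑ j ∈ Finset.range η.length, μ (η.take (j + 1)) * ν (η.drop j)

/-- The cloud `β_h`: value `1 - h(x₀)` on level-0 markers `(x₀)`, value `h(x₀)`
on level-1 markers `(x₀,x₁)`, and `0` on higher levels. -/
def cloudBeta {X : Type*} (h : X → ℝ) : List X → ℝ
  | [x] => 1 - h x
  | [x, _] => h x
  | _ => 0

/-- The cloud `I_f`: value `f(x₀)` on level-0 markers, `0` elsewhere. -/
def cloudI {X : Type*} (f : X → ℝ) : List X → ℝ
  | [x] => f x
  | _ => 0

/-- The convolution product `ν₁ * ⋯ * νₙ` (empty product = `ρ⁰ = I_1`). -/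
def cloudProd {X : Type*} {n : ℕ} (νs : Fin n → List X → ℝ) : List X → ℝ :=
  (List.ofFn νs).foldr cloudConv (cloudI fun _ => 1)

open Classical in
/-- `π_Λ`, the indicator cloud of `∂Λ`: markers `(x₀,…,x_k)` with
`x₀,…,x_{k-1} ∈ Λ` and `x_k ∉ Λ`. -/
noncomputable def cloudPi {X : Type*} (Λ : Set X) : List X → ℝ :=
  fun η => if (∀ x ∈ η.dropLast, x ∈ Λ) ∧ (∀ x ∈ η.getLast?, x ∉ Λ) then 1 else 0

section basic
variable {X : Type*}

lemma cloudBeta_len3 (h : X → ℝ) (l : List X) (hl : 3 ≤ l.length) : cloudBeta h l = 0 := by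
  match l with
  | a :: b :: c :: t => rfl
  | [] => simp at hl
  | [a] => simp at hl
  | [a, b] => simp at hl

lemma cloudI_len2 (f : X → ℝ) (l : List X) (hl : 2 ≤ l.length) : cloudI f l = 0 := by
  match l with
  | a :: b :: t => rfl
  | [] => simp at hl
  | [a] => simp at hl

lemma cloudConv_assoc (μ ν ρ : List X → ℝ) :
    cloudConv (cloudConv μ ν) ρ = cloudConv μ (cloudConv ν ρ) := by
  funext η
  set L := η.length with hL
  show (∑ j ∈ Finset.range L, cloudConv μ ν (η.take (j+1)) * ρ (η.drop j))
      = ∑ i ∈ Finset.range L, μ (η.take (i+1)) * cloudConv ν ρ (η.drop i)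
  have lhs : ∀ j ∈ Finset.range L,
      cloudConv μ ν (η.take (j+1)) * ρ (η.drop j)
        = ∑ i ∈ Finset.Ico 0 (j+1), μ (η.take (i+1)) * (ν ((η.take (j+1)).drop i) * ρ (η.drop j)) := by
    intro j hj
    rw [Finset.mem_range] at hj
    have hlen : (η.take (j+1)).length = j + 1 := by
      rw [List.length_take]; omega
    rw [cloudConv, hlen, Finset.sum_mul, Finset.range_eq_Ico]
    refine Finset.sum_congr rfl fun i hi => ?_
    rw [Finset.mem_Ico] at hi
    rw [List.take_take, min_eq_left (by omega : i + 1 ≤ j + 1), mul_assoc]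
  have rhs : ∀ i ∈ Finset.range L,
      μ (η.take (i+1)) * cloudConv ν ρ (η.drop i)
        = ∑ j ∈ Finset.Ico i L, μ (η.take (i+1)) * (ν ((η.take (j+1)).drop i) * ρ (η.drop j)) := by
    intro i hi
    rw [Finset.mem_range] at hi
    have hlen : (η.drop i).length = L - i := by rw [List.length_drop]
    rw [cloudConv, hlen, Finset.mul_sum, Finset.sum_Ico_eq_sum_range]
    refine Finset.sum_congr rfl fun m hm => ?_
    rw [Finset.mem_range] at hm
    rw [List.drop_take, List.drop_drop]
    have e1 : i + m + 1 - i = m + 1 := by omega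
    have e2 : m + i = i + m := by omega
    rw [e1]
  rw [Finset.sum_congr rfl lhs, Finset.sum_congr rfl rhs, Finset.range_eq_Ico,
    ← Finset.sum_Ico_Ico_comm]

lemma cloudConv_one_left (ν : List X → ℝ) (η : List X) (hη : η ≠ []) :
    cloudConv (cloudI fun _ => (1:ℝ)) ν η = ν η := by
  have hL : 0 < η.length := List.length_pos_iff.mpr hη
  rw [cloudConv]
  rw [Finset.sum_eq_single 0]
  · have : η.take 1 = [η.head hη] := by
      cases η with
      | nil => simp at hη
      | cons a t => simp
    rw [this]; simp [cloudI]
  · intro j hj hj0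
    rw [Finset.mem_range] at hj
    rw [cloudI_len2, zero_mul]
    rw [List.length_take]
    omega
  · intro habs
    exact absurd (Finset.mem_range.mpr hL) habs

lemma cloudConv_one_right (ν : List X → ℝ) (η : List X) (hη : η ≠ []) :
    cloudConv ν (cloudI fun _ => (1:ℝ)) η = ν η := by
  have hL : 0 < η.length := List.length_pos_iff.mpr hη
  rw [cloudConv]
  rw [Finset.sum_eq_single (η.length - 1)]
  · have h1 : η.take (η.length - 1 + 1) = η := by
      rw [Nat.sub_add_cancel hL, List.take_length]
    have h2 : (η.drop (η.length - 1)) = [η.getLast hη] := by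
      conv_lhs => rw [← List.dropLast_append_getLast hη]
      have : (η.dropLast ++ [η.getLast hη]).length - 1 = η.dropLast.length := by simp
      rw [this, List.drop_left]
    rw [h1, h2]; simp [cloudI]
  · intro j hj hj0
    rw [Finset.mem_range] at hj
    rw [cloudI_len2 _ _ (by rw [List.length_drop]; omega), mul_zero]
  · intro habs
    exact absurd (Finset.mem_range.mpr (by omega)) habs

end basic

section prod
variable {X : Type*}

lemma foldr_conv_eq (l : List (List X → ℝ)) (x : List X → ℝ) :
    ∀ η : List X, η ≠ [] →
      (l.foldr cloudConv x) η = cloudConv (l.foldr cloudConv (cloudI fun _ => 1)) x η := by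
  induction l with
  | nil => intro η hη; exact (cloudConv_one_left x η hη).symm
  | cons b l ih =>
    intro η hη
    show cloudConv b (l.foldr cloudConv x) η = _
    rw [cloudConv]
    have : ∀ j ∈ Finset.range η.length,
        b (η.take (j+1)) * (l.foldr cloudConv x) (η.drop j)
          = b (η.take (j+1)) * cloudConv (l.foldr cloudConv (cloudI fun _ => 1)) x (η.drop j) := by
      intro j hj
      rw [Finset.mem_range] at hj
      congr 1
      exact ih _ (by rw [← List.length_pos_iff, List.length_drop]; omega)
    rw [Finset.sum_congr rfl this]
    have : (∑ j ∈ Finset.range η.length, b (η.take (j+1)) *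
        cloudConv (l.foldr cloudConv (cloudI fun _ => 1)) x (η.drop j))
          = cloudConv b (cloudConv (l.foldr cloudConv (cloudI fun _ => 1)) x) η := rfl
    rw [this, ← cloudConv_assoc]
    rfl

lemma cloudProd_succ (g : ℕ → X → ℝ) (n : ℕ) (η : List X) (hη : η ≠ []) :
    cloudProd (fun i : Fin (n+1) => cloudBeta (g i)) η
      = cloudConv (cloudProd fun i : Fin n => cloudBeta (g i)) (cloudBeta (g n)) η := by
  have hofn : (List.ofFn fun i : Fin (n+1) => cloudBeta (g i))
      = (List.ofFn fun i : Fin n => cloudBeta (g i)) ++ [cloudBeta (g n)] := by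
    rw [List.ofFn_succ']
    simp [List.concat_eq_append, Fin.castSucc]
  rw [cloudProd, hofn, List.foldr_append]
  have e1 : List.foldr cloudConv (cloudI fun _ => (1:ℝ)) [cloudBeta (g n)]
      = cloudConv (cloudBeta (g n)) (cloudI fun _ => 1) := rfl
  rw [e1, foldr_conv_eq _ _ η hη, ← cloudConv_assoc]
  rw [cloudProd]
  exact cloudConv_one_right _ η hη

lemma cloudProd_zero_single (x : X) :
    cloudProd (fun i : Fin 0 => cloudBeta ((fun _ => (fun _ => (0:ℝ))) i)) [x] = 1 := rfl

lemma cloudProd_zero (g : Fin 0 → List X → ℝ) (η : List X) :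
    cloudProd g η = cloudI (fun _ => (1:ℝ)) η := rfl

end prod

section recur
variable {X : Type*}

@[simp] lemma cloudBeta_single (f : X → ℝ) (x : X) : cloudBeta f [x] = 1 - f x := rfl
@[simp] lemma cloudBeta_pair (f : X → ℝ) (x y : X) : cloudBeta f [x, y] = f x := rfl

lemma conv_beta_single (μ : List X → ℝ) (f : X → ℝ) (x : X) :
    cloudConv μ (cloudBeta f) [x] = (1 - f x) * μ [x] := by
  simp [cloudConv]
  ring

lemma conv_beta_append (μ : List X → ℝ) (f : X → ℝ) (δ : List X) (z y : X) :
    cloudConv μ (cloudBeta f) (δ ++ [z, y])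
      = (1 - f y) * μ (δ ++ [z, y]) + f z * μ (δ ++ [z]) := by
  have hL : (δ ++ [z, y]).length = δ.length + 2 := by simp
  rw [cloudConv]
  rw [hL, Finset.sum_range_succ, Finset.sum_range_succ]
  have h0 : ∑ j ∈ Finset.range δ.length,
      μ ((δ++[z,y]).take (j+1)) * cloudBeta f ((δ++[z,y]).drop j) = 0 := by
    refine Finset.sum_eq_zero fun j hj => ?_
    rw [Finset.mem_range] at hj
    rw [cloudBeta_len3 _ _ (by rw [List.length_drop, hL]; omega), mul_zero]
  rw [h0, zero_add]
  have hsplit : δ ++ [z, y] = (δ ++ [z]) ++ [y] := by simp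
  have t1 : (δ++[z,y]).take (δ.length + 1) = δ ++ [z] := by
    rw [hsplit, show δ.length + 1 = (δ ++ [z]).length by simp]
    exact List.take_left
  have d1 : (δ++[z,y]).drop δ.length = [z, y] := List.drop_left
  have t2 : (δ++[z,y]).take (δ.length + 1 + 1) = δ ++ [z,y] := by
    rw [show δ.length + 1 + 1 = (δ ++ [z,y]).length by simp]
    exact List.take_length
  have d2 : (δ++[z,y]).drop (δ.length+1) = [y] := by
    rw [hsplit, show δ.length + 1 = (δ ++ [z]).length by simp]
    exact List.drop_left
  rw [t1, d1, t2, d2, cloudBeta_pair, cloudBeta_single]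
  ring

lemma cloudConv_nonneg {μ ν : List X → ℝ} (hμ : ∀ l, 0 ≤ μ l) (hν : ∀ l, 0 ≤ ν l) :
    ∀ l, 0 ≤ cloudConv μ ν l := by
  intro l
  exact Finset.sum_nonneg fun j _ => mul_nonneg (hμ _) (hν _)

lemma cloudBeta_nonneg {f : X → ℝ} (h0 : ∀ x, 0 ≤ f x) (h1 : ∀ x, f x ≤ 1) :
    ∀ l, 0 ≤ cloudBeta f l := by
  intro l
  match l with
  | [] => exact le_refl 0
  | [x] => simp [h1 x]
  | [x, y] => simp [h0 x]
  | a :: b :: c :: t => rw [cloudBeta_len3 _ _ (by simp)]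

lemma cloudI_one_nonneg : ∀ l : List X, 0 ≤ cloudI (fun _ => (1:ℝ)) l := by
  intro l
  match l with
  | [] => exact le_refl 0
  | [x] => norm_num [cloudI]
  | a :: b :: t => rw [cloudI_len2 _ _ (by simp)]

lemma foldr_nonneg (l : List (List X → ℝ)) (hl : ∀ μ ∈ l, ∀ η, 0 ≤ μ η) :
    ∀ η, 0 ≤ (l.foldr cloudConv (cloudI fun _ => 1)) η := by
  induction l with
  | nil => exact cloudI_one_nonneg
  | cons b l ih =>
    exact cloudConv_nonneg (hl b (by simp)) (ih fun μ hμ => hl μ (by simp [hμ]))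

lemma cloudProd_nonneg {n : ℕ} {g : ℕ → X → ℝ} (h0 : ∀ i x, 0 ≤ g i x)
    (h1 : ∀ i x, g i x ≤ 1) : ∀ l, 0 ≤ cloudProd (fun i : Fin n => cloudBeta (g i)) l := by
  refine foldr_nonneg _ fun μ hμ => ?_
  rw [List.mem_ofFn] at hμ
  obtain ⟨i, rfl⟩ := hμ
  exact cloudBeta_nonneg (h0 i) (h1 i)

end recur

section analytic
open Filter Finset

lemma one_sub_le_exp_neg (t : ℝ) : 1 - t ≤ Real.exp (-t) := by
  have := Real.add_one_le_exp (-t)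
  linarith

lemma exp_neg_two_le (t : ℝ) (h0 : 0 ≤ t) (h1 : t ≤ 1/2) : Real.exp (-(2*t)) ≤ 1 - t := by
  have h2 : 1 + 2*t ≤ Real.exp (2*t) := by
    have := Real.add_one_le_exp (2*t); linarith
  have hpos : (0:ℝ) < 1 + 2*t := by linarith
  have : Real.exp (-(2*t)) = (Real.exp (2*t))⁻¹ := by rw [Real.exp_neg]
  rw [this]
  have h3 : (Real.exp (2*t))⁻¹ ≤ (1 + 2*t)⁻¹ := by
    apply inv_anti₀ hpos h2
  refine h3.trans ?_
  rw [inv_le_iff_one_le_mul₀ hpos]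
  nlinarith

lemma prod_Ico_le_exp {b : ℕ → ℝ} (h0 : ∀ n, 0 ≤ b n) (h1 : ∀ n, b n ≤ 1) (N n : ℕ) :
    ∏ j ∈ Ico N n, (1 - b j) ≤ Real.exp (∑ j ∈ range N, b j - ∑ j ∈ range n, b j) := by
  have step1 : ∏ j ∈ Ico N n, (1 - b j) ≤ ∏ j ∈ Ico N n, Real.exp (-(b j)) := by
    refine Finset.prod_le_prod (fun j _ => by linarith [h1 j]) (fun j _ => one_sub_le_exp_neg _)
  refine step1.trans ?_
  rw [← Real.exp_sum]
  apply Real.exp_le_exp.mpr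
  rcases le_or_gt N n with hNn | hNn
  · rw [Finset.sum_neg_distrib, Finset.sum_Ico_eq_sub _ hNn]
    linarith
  · rw [Finset.Ico_eq_empty (by omega), Finset.sum_empty]
    have : ∑ j ∈ range n, b j ≤ ∑ j ∈ range N, b j := by
      apply Finset.sum_le_sum_of_subset_of_nonneg (Finset.range_subset_range.mpr (by omega))
      intro i _ _; exact h0 i
    linarith

lemma tendsto_prod_Ico_zero {b : ℕ → ℝ} (h0 : ∀ n, 0 ≤ b n) (h1 : ∀ n, b n ≤ 1)
    (hdiv : Tendsto (fun n => ∑ j ∈ range n, b j) atTop atTop) (N : ℕ) :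
    Tendsto (fun n => ∏ j ∈ Ico N n, (1 - b j)) atTop (nhds 0) := by
  apply squeeze_zero (g := fun n => Real.exp (∑ j ∈ range N, b j - ∑ j ∈ range n, b j))
  · intro n
    exact Finset.prod_nonneg fun j _ => by linarith [h1 j]
  · intro n; exact prod_Ico_le_exp h0 h1 N n
  · apply Real.tendsto_exp_atBot.comp
    apply Filter.tendsto_atBot_add_const_left
    exact Filter.tendsto_neg_atTop_atBot.comp hdiv

lemma tele_sum {b : ℕ → ℝ} (n : ℕ) :
    ∑ j ∈ range n, b j * ∏ i ∈ range j, (1 - b i) = 1 - ∏ j ∈ range n, (1 - b j) := by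
  induction n with
  | zero => simp
  | succ n ih => rw [Finset.sum_range_succ, Finset.prod_range_succ, ih]; ring

lemma tendsto_partial_atTop {b : ℕ → ℝ} (h0 : ∀ n, 0 ≤ b n)
    (htop : ∑' n, ENNReal.ofReal (b n) = ⊤) :
    Tendsto (fun n => ∑ j ∈ range n, b j) atTop atTop := by
  rw [← not_summable_iff_tendsto_nat_atTop_of_nonneg h0]
  intro hs
  rw [← ENNReal.ofReal_tsum_of_nonneg h0 hs] at htop
  exact ENNReal.ofReal_ne_top htop

lemma summable_of_tsum_ne_top {b : ℕ → ℝ} (h0 : ∀ n, 0 ≤ b n)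
    (hne : ∑' n, ENNReal.ofReal (b n) ≠ ⊤) : Summable b := by
  have := ENNReal.summable_toReal hne
  have heq : (fun n => (ENNReal.ofReal (b n)).toReal) = b := by
    funext n; rw [ENNReal.toReal_ofReal (h0 n)]
  rwa [heq] at this

lemma decay {u a b : ℕ → ℝ} (hu0 : u 0 = 0) (ha : ∀ n, 0 ≤ a n)
    (hb0 : ∀ n, 0 ≤ b n) (hb1 : ∀ n, b n ≤ 1)
    (hrec : ∀ n, u (n+1) = (1 - b n) * u n + a n) (hsa : Summable a)
    (hdiv : Tendsto (fun n => ∑ j ∈ range n, b j) atTop atTop) :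
    Tendsto u atTop (nhds 0) := by
  have hun : ∀ n, 0 ≤ u n := by
    intro n
    induction n with
    | zero => rw [hu0]
    | succ n ih =>
      rw [hrec n]
      have h1 := hb1 n
      have h2 := ha n
      nlinarith
  have key : ∀ N n, N ≤ n →
      u n ≤ u N * ∏ j ∈ Ico N n, (1 - b j) + ∑ j ∈ Ico N n, a j := by
    intro N n hNn
    induction n with
    | zero =>
      have : N = 0 := by omega
      subst this; simp
    | succ n ih =>
      rcases Nat.lt_or_ge N (n+1) with hlt | hge
      · have hNn' : N ≤ n := by omega
        have ihn := ih hNn'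
        rw [hrec n, Finset.prod_Ico_succ_top hNn', Finset.sum_Ico_succ_top hNn']
        have hb := hb0 n
        have hb' := hb1 n
        have hprod : 0 ≤ ∏ j ∈ Ico N n, (1 - b j) :=
          Finset.prod_nonneg fun j _ => by linarith [hb1 j]
        have hsum : 0 ≤ ∑ j ∈ Ico N n, a j := Finset.sum_nonneg fun j _ => ha j
        nlinarith [hun N, hun n]
      · have : N = n + 1 := by omega
        subst this; simp
  rw [Metric.tendsto_atTop]
  intro ε hε
  -- choose N with tail sums small
  have hts := hsa.hasSum.tendsto_sum_nat
  rw [Metric.tendsto_atTop] at hts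
  obtain ⟨N, hN⟩ := hts (ε/4) (by positivity)
  have htail : ∀ n, ∑ j ∈ Ico N n, a j ≤ ε/2 := by
    intro n
    rcases le_or_gt N n with hNn | hNn
    · rw [Finset.sum_Ico_eq_sub _ hNn]
      have h1 := hN N le_rfl
      have h2 : ∑ j ∈ range n, a j ≤ ∑' j, a j := Summable.sum_le_tsum _ (fun i _ => ha i) hsa
      rw [Real.dist_eq, abs_lt] at h1
      linarith
    · rw [Finset.Ico_eq_empty (by omega), Finset.sum_empty]
      linarith
  have hprodz := tendsto_prod_Ico_zero hb0 hb1 hdiv N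
  rw [Metric.tendsto_atTop] at hprodz
  obtain ⟨M, hM⟩ := hprodz (ε/(4*(u N + 1)))
    (by have := hun N; apply div_pos (by linarith) (by linarith))
  refine ⟨max N M, fun n hn => ?_⟩
  have hNn : N ≤ n := le_trans (le_max_left _ _) hn
  have hMn : M ≤ n := le_trans (le_max_right _ _) hn
  have hk := key N n hNn
  have hP := hM n hMn
  rw [Real.dist_eq, sub_zero, abs_lt] at hP ⊢
  have hPnn : 0 ≤ ∏ j ∈ Ico N n, (1 - b j) :=
    Finset.prod_nonneg fun j _ => by linarith [hb1 j]
  have hP' : ∏ j ∈ Ico N n, (1 - b j) < ε/(4*(u N + 1)) := by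
    rcases hP with ⟨_, h⟩; linarith [abs_of_nonneg hPnn]
  have huN := hun N
  have h1 : u N * ∏ j ∈ Ico N n, (1 - b j) ≤ u N * (ε/(4*(u N + 1))) :=
    mul_le_mul_of_nonneg_left hP'.le huN
  have h2 : u N * (ε/(4*(u N + 1))) < ε/2 := by
    rw [div_eq_mul_inv]
    have hd : (0:ℝ) < 4*(u N + 1) := by positivity
    rw [mul_comm ε, mul_comm, mul_assoc]
    have : (4*(u N + 1))⁻¹ * (ε * u N) < ε/2 ↔ ε * u N < ε/2 * (4*(u N+1)) := by
      rw [inv_mul_lt_iff₀ hd, mul_comm (ε/2)]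
    rw [this]
    nlinarith
  constructor
  · linarith [hun n]
  · calc u n ≤ u N * ∏ j ∈ Ico N n, (1 - b j) + ∑ j ∈ Ico N n, a j := hk
      _ < ε/2 + ε/2 := by have := htail n; linarith
      _ = ε := by ring

end analytic

section pos
open Filter Finset

lemma pos_prod {a : ℕ → ℝ} (h0 : ∀ n, 0 ≤ a n) (hsa : Summable a) (J : Finset ℕ)
    (hJ : ∀ i ∉ J, a i < 1) :
    ∃ c > 0, ∀ n : ℕ, c ≤ ∏ i ∈ Finset.range n \ J, (1 - a i) := by
  obtain ⟨M, hM⟩ : ∃ M, ∀ i ≥ M, a i < 1/2 := by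
    have := hsa.tendsto_atTop_zero
    rw [Metric.tendsto_atTop] at this
    obtain ⟨M, hM⟩ := this (1/2) (by norm_num)
    exact ⟨M, fun i hi => by
      have := hM i hi; rw [Real.dist_eq, sub_zero, abs_lt] at this; linarith [this.2]⟩
  set A := ∏ i ∈ Finset.range M \ J, (1 - a i) with hA
  have hApos : 0 < A := Finset.prod_pos fun i hi => by
    rw [Finset.mem_sdiff] at hi
    linarith [hJ i hi.2]
  refine ⟨A * Real.exp (-(2 * ∑' n, a n)), by positivity, fun n => ?_⟩
  set S := Finset.range n \ J with hS
  have hsplit : ∏ i ∈ S ∩ Finset.range M, (1 - a i) * 1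
      = ∏ i ∈ S ∩ Finset.range M, (1 - a i) := by simp
  have hdecomp : (∏ i ∈ S ∩ Finset.range M, (1 - a i)) * ∏ i ∈ S \ Finset.range M, (1 - a i)
      = ∏ i ∈ S, (1 - a i) := Finset.prod_inter_mul_prod_diff S (Finset.range M) _
  rw [← hdecomp]
  have hfac1 : A ≤ ∏ i ∈ S ∩ Finset.range M, (1 - a i) := by
    have hsub : S ∩ Finset.range M ⊆ Finset.range M \ J := by
      intro i hi
      rw [Finset.mem_inter, hS, Finset.mem_sdiff] at hi
      rw [Finset.mem_sdiff]
      exact ⟨hi.2, hi.1.2⟩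
    have := Finset.prod_sdiff hsub (f := fun i => 1 - a i)
    rw [hA, ← this]
    have h1 : ∏ i ∈ (Finset.range M \ J) \ (S ∩ Finset.range M), (1 - a i) ≤ 1 := by
      apply Finset.prod_le_one
      · intro i hi
        rw [Finset.mem_sdiff, Finset.mem_sdiff] at hi
        linarith [hJ i hi.1.2]
      · intro i _; linarith [h0 i]
    have h2 : 0 ≤ ∏ i ∈ S ∩ Finset.range M, (1 - a i) := by
      apply Finset.prod_nonneg
      intro i hi
      rw [Finset.mem_inter, hS, Finset.mem_sdiff] at hi
      linarith [hJ i hi.1.2]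
    nlinarith
  have hfac2 : Real.exp (-(2 * ∑' n, a n)) ≤ ∏ i ∈ S \ Finset.range M, (1 - a i) := by
    have step : ∀ i ∈ S \ Finset.range M, Real.exp (-(2 * a i)) ≤ 1 - a i := by
      intro i hi
      rw [Finset.mem_sdiff, Finset.mem_range, not_lt] at hi
      exact exp_neg_two_le _ (h0 i) (hM i hi.2).le
    calc Real.exp (-(2 * ∑' n, a n))
        ≤ Real.exp (-(2 * ∑ i ∈ S \ Finset.range M, a i)) := by
          apply Real.exp_le_exp.mpr
          have := Summable.sum_le_tsum (S \ Finset.range M) (fun i _ => h0 i) hsa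
          linarith
      _ = ∏ i ∈ S \ Finset.range M, Real.exp (-(2 * a i)) := by
          rw [← Real.exp_sum]
          congr 1
          rw [Finset.mul_sum, ← Finset.sum_neg_distrib]
      _ ≤ ∏ i ∈ S \ Finset.range M, (1 - a i) := by
          apply Finset.prod_le_prod (fun i _ => (Real.exp_pos _).le) step
  have h2 : 0 ≤ ∏ i ∈ S ∩ Finset.range M, (1 - a i) := le_trans hApos.le hfac1
  have h3 : 0 < Real.exp (-(2 * ∑' n, a n)) := Real.exp_pos _
  nlinarith

end pos

section main
open Filter Finset
variable {X : Type*} {Λ : Set X} {h : ℕ → X → ℝ}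

/-- Abbreviation for the partial products. -/
private def mu (h : ℕ → X → ℝ) (n : ℕ) (η : List X) : ℝ :=
  cloudProd (fun i : Fin n => cloudBeta (h i)) η

lemma mu_zero_single (x : X) : mu h 0 [x] = 1 := by
  show cloudI (fun _ => (1:ℝ)) [x] = 1
  rfl

lemma mu_zero_long (δ : List X) (z y : X) : mu h 0 (δ ++ [z, y]) = 0 := by
  show cloudI (fun _ => (1:ℝ)) (δ ++ [z, y]) = 0
  exact cloudI_len2 _ _ (by simp)

lemma mu_succ_single (n : ℕ) (x : X) :
    mu h (n+1) [x] = (1 - h n x) * mu h n [x] := by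
  rw [mu, cloudProd_succ _ _ _ (by simp), conv_beta_single]
  rfl

lemma mu_succ_long (n : ℕ) (δ : List X) (z y : X) :
    mu h (n+1) (δ ++ [z, y])
      = (1 - h n y) * mu h n (δ ++ [z, y]) + h n z * mu h n (δ ++ [z]) := by
  rw [mu, cloudProd_succ _ _ _ (by simp), conv_beta_append]
  rfl

lemma mu_single_prod (n : ℕ) (x : X) :
    mu h n [x] = ∏ j ∈ range n, (1 - h j x) := by
  induction n with
  | zero => rw [mu_zero_single]; simp
  | succ n ih => rw [mu_succ_single, ih, Finset.prod_range_succ]; ring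

lemma mu_nonneg (hh : ∀ n x, 0 ≤ h n x ∧ h n x ≤ Λ.indicator 1 x) (n : ℕ) (η : List X) :
    0 ≤ mu h n η := by
  apply cloudProd_nonneg (fun i x => (hh i x).1)
  intro i x
  refine le_trans (hh i x).2 ?_
  classical
  by_cases hx : x ∈ Λ <;> simp [Set.indicator_apply, hx]

lemma h_eq_zero (hh : ∀ n x, 0 ≤ h n x ∧ h n x ≤ Λ.indicator 1 x) {x : X} (hx : x ∉ Λ) (n : ℕ) :
    h n x = 0 := by
  have h1 := (hh n x).1
  have h2 := (hh n x).2
  rw [Set.indicator_of_notMem hx] at h2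
  linarith

lemma h_le_one (hh : ∀ n x, 0 ≤ h n x ∧ h n x ≤ Λ.indicator 1 x) (n : ℕ) (x : X) :
    h n x ≤ 1 := by
  refine le_trans (hh n x).2 ?_
  classical
  by_cases hx : x ∈ Λ <;> simp [Set.indicator_apply, hx]

/-- G2: if some element of `ξ` is outside `Λ`, then `μ n (ξ ++ [y]) = 0`. -/
lemma mu_eq_zero (hh : ∀ n x, 0 ≤ h n x ∧ h n x ≤ Λ.indicator 1 x) (ξ : List X) :
    ξ ≠ [] → ∀ (y : X) (n : ℕ), (∃ w ∈ ξ, w ∉ Λ) → mu h n (ξ ++ [y]) = 0 := by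
  induction ξ using List.reverseRecOn with
  | nil => intro habs; exact absurd rfl habs
  | append_singleton δ z ih =>
    intro _ y n hbad
    have hassoc : δ ++ [z] ++ [y] = δ ++ [z, y] := by simp
    rw [hassoc]
    have hza : ∀ m, h m z * mu h m (δ ++ [z]) = 0 := by
      obtain ⟨w, hw, hwΛ⟩ := hbad
      rw [List.mem_append, List.mem_singleton] at hw
      rcases hw with hw | rfl
      · intro m
        rcases List.eq_nil_or_concat δ with rfl | ⟨γ, b, rfl⟩
        · simp at hw
        · rw [ih (by simp) z m ⟨w, hw, hwΛ⟩, mul_zero]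
      · intro m; rw [h_eq_zero hh hwΛ, zero_mul]
    induction n with
    | zero => exact mu_zero_long δ z y
    | succ n ihn => rw [mu_succ_long, ihn, hza, mul_zero, add_zero]
end main

section main2
open Filter Finset
variable {X : Type*} {Λ : Set X} {h : ℕ → X → ℝ}

/-- G3: markers entirely inside `Λ`. -/
lemma mu_tendsto_inner (hh : ∀ n x, 0 ≤ h n x ∧ h n x ≤ Λ.indicator 1 x)
    (hdiv : ∀ x ∈ Λ, Tendsto (fun n => ∑ j ∈ range n, h j x) atTop atTop) (δ : List X) :
    ∀ z : X, (∀ w ∈ δ ++ [z], w ∈ Λ) →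
      Tendsto (fun n => mu h n (δ ++ [z])) atTop (nhds 0) ∧
      Tendsto (fun n => ∑ j ∈ range n, h j z * mu h j (δ ++ [z])) atTop (nhds 1) := by
  induction δ using List.reverseRecOn with
  | nil =>
    intro z hz
    have hzΛ : z ∈ Λ := hz z (by simp)
    have hP : Tendsto (fun n => ∏ j ∈ range n, (1 - h j z)) atTop (nhds 0) := by
      have := tendsto_prod_Ico_zero (fun n => (hh n z).1) (fun n => h_le_one hh n z)
        (hdiv z hzΛ) 0
      simpa [← Finset.range_eq_Ico] using this
    have hfirst : Tendsto (fun n => mu h n ([] ++ [z])) atTop (nhds 0) := by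
      simp only [List.nil_append]
      have heq : (fun n => mu h n [z]) = fun n => ∏ j ∈ range n, (1 - h j z) := by
        funext n; rw [mu_single_prod]
      rw [heq]; exact hP
    refine ⟨hfirst, ?_⟩
    simp only [List.nil_append]
    have heq : (fun n => ∑ j ∈ range n, h j z * mu h j [z])
        = fun n => 1 - ∏ j ∈ range n, (1 - h j z) := by
      funext n
      rw [← tele_sum]
      exact Finset.sum_congr rfl fun j _ => by rw [mu_single_prod]
    rw [heq]
    have := Filter.Tendsto.const_sub 1 hP
    simpa using this
  | append_singleton γ b ih =>
    intro z hall
    have hassoc : γ ++ [b] ++ [z] = γ ++ [b, z] := by simp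
    have hbΛ : b ∈ Λ := hall b (by simp)
    have hzΛ : z ∈ Λ := hall z (by simp)
    have hsub : ∀ w ∈ γ ++ [b], w ∈ Λ := fun w hw => hall w (List.mem_append_left _ hw)
    obtain ⟨ihu, ihA⟩ := ih b hsub
    have ha : ∀ n, 0 ≤ h n b * mu h n (γ ++ [b]) :=
      fun n => mul_nonneg (hh n b).1 (mu_nonneg hh n _)
    have hrec : ∀ n, mu h (n+1) (γ ++ [b, z])
        = (1 - h n z) * mu h n (γ ++ [b, z]) + h n b * mu h n (γ ++ [b]) :=
      fun n => mu_succ_long n γ b z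
    have hu0 : mu h 0 (γ ++ [b, z]) = 0 := mu_zero_long γ b z
    have hamono : Monotone (fun n => ∑ j ∈ range n, h j b * mu h j (γ ++ [b])) := by
      apply monotone_nat_of_le_succ
      intro n
      rw [Finset.sum_range_succ]
      linarith [ha n]
    have hble : ∀ n, ∑ j ∈ range n, h j b * mu h j (γ ++ [b]) ≤ 1 :=
      fun n => hamono.ge_of_tendsto ihA n
    have hsa : Summable (fun n => h n b * mu h n (γ ++ [b])) :=
      summable_of_sum_range_le ha hble
    have hu : Tendsto (fun n => mu h n (γ ++ [b, z])) atTop (nhds 0) :=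
      decay hu0 ha (fun n => (hh n z).1) (fun n => h_le_one hh n z) hrec hsa (hdiv z hzΛ)
    constructor
    · simp only [hassoc]; exact hu
    · simp only [hassoc]
      have hid : ∀ n, ∑ j ∈ range n, h j z * mu h j (γ ++ [b, z])
          = (∑ j ∈ range n, h j b * mu h j (γ ++ [b])) - mu h n (γ ++ [b, z]) := by
        intro n
        induction n with
        | zero => simp [hu0]
        | succ n ihn =>
          rw [Finset.sum_range_succ, Finset.sum_range_succ, ihn, hrec n]
          ring
      have heq : (fun n => ∑ j ∈ range n, h j z * mu h j (γ ++ [b, z]))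
          = fun n => (∑ j ∈ range n, h j b * mu h j (γ ++ [b])) - mu h n (γ ++ [b, z]) :=
        funext hid
      rw [heq]
      have := ihA.sub hu
      simpa using this

/-- G4: boundary markers. -/
lemma mu_tendsto_boundary (hh : ∀ n x, 0 ≤ h n x ∧ h n x ≤ Λ.indicator 1 x)
    (hdiv : ∀ x ∈ Λ, Tendsto (fun n => ∑ j ∈ range n, h j x) atTop atTop)
    (δ : List X) (z y : X) (hall : ∀ w ∈ δ ++ [z], w ∈ Λ) (hy : y ∉ Λ) :
    Tendsto (fun n => mu h n (δ ++ [z, y])) atTop (nhds 1) := by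
  have hA := (mu_tendsto_inner hh hdiv δ z hall).2
  have hid : ∀ n, mu h n (δ ++ [z, y]) = ∑ j ∈ range n, h j z * mu h j (δ ++ [z]) := by
    intro n
    induction n with
    | zero => simp [mu_zero_long]
    | succ n ihn =>
      rw [mu_succ_long, ihn, h_eq_zero hh hy, Finset.sum_range_succ]
      ring
  have heq : (fun n => mu h n (δ ++ [z, y]))
      = fun n => ∑ j ∈ range n, h j z * mu h j (δ ++ [z]) := funext hid
  rw [heq]
  exact hA

end main2

section main3
open Filter Finset
variable {X : Type*} {Λ : Set X} {h : ℕ → X → ℝ}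

lemma replicate_two (x : X) (m : ℕ) :
    List.replicate (m+2) x = List.replicate m x ++ [x, x] := by
  rw [List.replicate_add]
  rfl

lemma mu_replicate_lb (hh : ∀ n x, 0 ≤ h n x ∧ h n x ≤ Λ.indicator 1 x) {x : X}
    (J : Finset ℕ) (hJ1 : ∀ i ∈ J, h i x = 1) :
    ∀ n, ∏ i ∈ range n \ J, (1 - h i x)
      ≤ mu h n (List.replicate ((J ∩ range n).card + 1) x) := by
  intro n
  induction n with
  | zero => simp [mu_zero_single]
  | succ n ih =>
    by_cases hn : n ∈ J
    · have hins : J ∩ range (n+1) = insert n (J ∩ range n) := by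
        ext i
        simp only [Finset.mem_inter, Finset.mem_range, Finset.mem_insert]
        by_cases hiJ : i ∈ J
        · simp only [hiJ, true_and]; omega
        · have hne : i ≠ n := fun e => hiJ (e ▸ hn)
          simp [hiJ, hne]
      have hcard : (J ∩ range (n+1)).card = (J ∩ range n).card + 1 := by
        rw [hins, Finset.card_insert_of_notMem (by simp)]
      have hsd : range (n+1) \ J = range n \ J := by
        ext i
        simp only [Finset.mem_sdiff, Finset.mem_range]
        by_cases hiJ : i ∈ J
        · simp [hiJ]
        · have hne : i ≠ n := fun e => hiJ (e ▸ hn)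
          simp only [hiJ, not_false_iff, and_true]; omega
      rw [hcard, hsd, replicate_two, mu_succ_long, hJ1 n hn, ← List.replicate_succ']
      have hmu1 : 0 ≤ mu h n (List.replicate (J ∩ Finset.range n).card x ++ [x, x]) :=
        mu_nonneg hh n _
      nlinarith [ih]
    · have hcard : J ∩ range (n+1) = J ∩ range n := by
        ext i
        simp only [Finset.mem_inter, Finset.mem_range]
        by_cases hiJ : i ∈ J
        · have hne : i ≠ n := fun e => hn (e ▸ hiJ)
          simp only [hiJ, true_and]; omega
        · simp [hiJ]
      have hsd : range (n+1) \ J = insert n (range n \ J) := by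
        ext i
        simp only [Finset.mem_sdiff, Finset.mem_range, Finset.mem_insert]
        by_cases hiJ : i ∈ J
        · have hne : i ≠ n := fun e => hn (e ▸ hiJ)
          simp [hiJ, hne]
        · simp only [hiJ, not_false_iff, and_true]; omega
      rw [hcard, hsd, Finset.prod_insert (by simp)]
      have hax0 := (hh n x).1
      have hax1 := h_le_one hh n x
      rcases Nat.eq_zero_or_pos (J ∩ range n).card with hm | hm
      · rw [hm] at ih ⊢
        rw [show (0:ℕ) + 1 = 1 from rfl] at ih ⊢
        rw [show List.replicate 1 x = [x] from rfl] at ih ⊢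
        rw [mu_succ_single]
        have hpnn : 0 ≤ ∏ i ∈ range n \ J, (1 - h i x) :=
          Finset.prod_nonneg fun i _ => by linarith [h_le_one hh i x]
        nlinarith
      · obtain ⟨m, hm'⟩ : ∃ m, (J ∩ range n).card = m + 1 := ⟨_, (Nat.succ_pred_eq_of_pos hm).symm⟩
        rw [hm'] at ih ⊢
        rw [replicate_two, mu_succ_long]
        have h1 : List.replicate m x ++ [x] = List.replicate (m + 1) x :=
          List.replicate_succ'.symm
        rw [h1, ← replicate_two]
        have hpnn : 0 ≤ ∏ i ∈ range n \ J, (1 - h i x) :=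
          Finset.prod_nonneg fun i _ => by linarith [h_le_one hh i x]
        have hmu1 : 0 ≤ mu h n (List.replicate (m+1) x) := mu_nonneg hh n _
        nlinarith

end main3

open Filter Finset

/-- Pointwise cleaning criterion: for `0 ≤ hₙ ≤ χ_Λ`, the products
`μₙ = β_{h₁} * ⋯ * β_{hₙ}` converge markerwise to `π_Λ` iff
`Σ_n hₙ(x) = ∞` for every `x ∈ Λ`. -/
theorem pointwise_cleaning_criterion {X : Type*} (Λ : Set X) (h : ℕ → X → ℝ)
    (hh : ∀ n x, 0 ≤ h n x ∧ h n x ≤ Λ.indicator 1 x) :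
    (∀ η : List X, η ≠ [] →
        Filter.Tendsto (fun n : ℕ => cloudProd (fun i : Fin n => cloudBeta (h i)) η)
          Filter.atTop (nhds (cloudPi Λ η)))
    ↔ ∀ x ∈ Λ, ∑' n : ℕ, ENNReal.ofReal (h n x) = ⊤ := by
  constructor
  · intro hconv x hxΛ
    by_contra hne
    have h0 : ∀ n, 0 ≤ h n x := fun n => (hh n x).1
    have hsa : Summable (fun n => h n x) := summable_of_tsum_ne_top h0 hne
    obtain ⟨N₁, hN₁⟩ : ∃ N, ∀ i ≥ N, h i x < 1 := by
      have ht := hsa.tendsto_atTop_zero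
      rw [Metric.tendsto_atTop] at ht
      obtain ⟨N, hN⟩ := ht (1/2) (by norm_num)
      refine ⟨N, fun i hi => ?_⟩
      have := hN i hi
      rw [Real.dist_eq, sub_zero, abs_lt] at this
      linarith [this.2]
    classical
    set J : Finset ℕ := (Finset.range N₁).filter (fun i => 1 ≤ h i x) with hJ
    have hJ1 : ∀ i ∈ J, h i x = 1 := by
      intro i hi
      rw [hJ, Finset.mem_filter] at hi
      exact le_antisymm (h_le_one hh i x) hi.2
    have hJout : ∀ i ∉ J, h i x < 1 := by
      intro i hi
      rw [hJ, Finset.mem_filter, Finset.mem_range] at hi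
      push_neg at hi
      rcases lt_or_ge i N₁ with hlt | hge
      · exact hi hlt
      · exact hN₁ i hge
    obtain ⟨c, hc, hcle⟩ := pos_prod h0 hsa J hJout
    set k := J.card with hk
    have hηne : List.replicate (k+1) x ≠ [] := by simp
    have hconv' := hconv _ hηne
    have hπ : cloudPi Λ (List.replicate (k+1) x) = 0 := by
      rw [cloudPi]
      rw [if_neg]
      rintro ⟨_, h2⟩
      have hg : (List.replicate (k+1) x).getLast? = some x := by
        rw [List.replicate_succ', List.getLast?_concat]
      exact (h2 x (by rw [hg]; simp)) hxΛ
    rw [hπ] at hconv'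
    have hlb : ∀ n ≥ N₁, c ≤ mu h n (List.replicate (k+1) x) := by
      intro n hn
      have hJcap : J ∩ Finset.range n = J := by
        rw [Finset.inter_eq_left]
        intro i hi
        rw [hJ, Finset.mem_filter, Finset.mem_range] at hi
        rw [Finset.mem_range]
        omega
      have hlb' := mu_replicate_lb hh J hJ1 n
      rw [hJcap, ← hk] at hlb'
      exact le_trans (hcle n) hlb'
    have hfin : c ≤ 0 :=
      ge_of_tendsto hconv' (eventually_atTop.mpr ⟨N₁, fun n hn => hlb n hn⟩)
    linarith
  · intro hdivtop η hη
    have hdiv : ∀ x ∈ Λ, Tendsto (fun n => ∑ j ∈ range n, h j x) atTop atTop :=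
      fun x hx => tendsto_partial_atTop (fun n => (hh n x).1) (hdivtop x hx)
    show Tendsto (fun n => mu h n η) atTop (nhds (cloudPi Λ η))
    rcases List.eq_nil_or_concat η with rfl | ⟨ξ, y, rfl⟩
    · exact absurd rfl hη
    simp only [List.concat_eq_append]
    rcases List.eq_nil_or_concat ξ with rfl | ⟨δ, z, rfl⟩
    · simp only [List.nil_append]
      by_cases hy : y ∈ Λ
      · have hπ : cloudPi Λ [y] = 0 := by simp [cloudPi, hy]
        rw [hπ]
        have := (mu_tendsto_inner hh hdiv [] y (by simpa using hy)).1
        simpa using this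
      · have hπ : cloudPi Λ [y] = 1 := by simp [cloudPi, hy]
        rw [hπ]
        have hconst : ∀ n, mu h n [y] = 1 := by
          intro n
          rw [mu_single_prod]
          apply Finset.prod_eq_one
          intro j _
          rw [h_eq_zero hh hy]
          ring
        rw [funext hconst]
        exact tendsto_const_nhds
    · simp only [List.concat_eq_append]
      have hassoc : δ ++ [z] ++ [y] = δ ++ [z, y] := by simp
      rw [hassoc]
      by_cases hall : ∀ w ∈ δ ++ [z], w ∈ Λ
      · by_cases hy : y ∈ Λ
        · have hπ : cloudPi Λ (δ ++ [z, y]) = 0 := by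
            rw [cloudPi, if_neg]
            rintro ⟨_, h2⟩
            have hg : (δ ++ [z, y]).getLast? = some y := by
              rw [← hassoc, List.getLast?_concat]
            exact (h2 y (by rw [hg]; simp)) hy
          rw [hπ]
          have hmem : ∀ w ∈ (δ ++ [z]) ++ [y], w ∈ Λ := by
            intro w hw
            rw [List.mem_append, List.mem_singleton] at hw
            rcases hw with hw | rfl
            · exact hall w hw
            · exact hy
          have := (mu_tendsto_inner hh hdiv (δ ++ [z]) y hmem).1
          rw [hassoc] at this
          exact this
        · have hπ : cloudPi Λ (δ ++ [z, y]) = 1 := by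
            rw [cloudPi, if_pos]
            constructor
            · intro w hw
              have hdl : (δ ++ [z, y]).dropLast = δ ++ [z] := by
                rw [← hassoc, List.dropLast_concat]
              rw [hdl] at hw
              exact hall w hw
            · intro w hw
              have hg : (δ ++ [z, y]).getLast? = some y := by
                rw [← hassoc, List.getLast?_concat]
              rw [hg] at hw
              simp at hw
              subst hw
              exact hy
          rw [hπ]
          exact mu_tendsto_boundary hh hdiv δ z y hall hy
      · push_neg at hall
        obtain ⟨w, hw, hwΛ⟩ := hall
        have hπ : cloudPi Λ (δ ++ [z, y]) = 0 := by
          rw [cloudPi, if_neg]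
          rintro ⟨h1, _⟩
          have hdl : (δ ++ [z, y]).dropLast = δ ++ [z] := by
            rw [← hassoc, List.dropLast_concat]
          exact hwΛ (h1 w (by rw [hdl]; exact hw))
        rw [hπ]
        have hz : ∀ n, mu h n (δ ++ [z, y]) = 0 := by
          intro n
          have := mu_eq_zero hh (δ ++ [z]) (by simp) y n ⟨w, hw, hwΛ⟩
          rwa [hassoc] at this
        rw [funext hz]
        exact tendsto_const_nhds
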